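/- Gronwall-type uniqueness: let U ⊆ ℝ^d be open and convex with 0 ∈ U, and for i, j = 1, …, d let η_{ij} : U → ℝ^d be measurable and locally bounded. If h : U → ℝ is twice continuously differentiable with ∇h(0) = 0 and ∂_i ∂_j h(y) = ⟨∇h(y), η_{ij}(y)⟩ for all i, j and all y ∈ U, then ∇h vanishes identically on U; in particular h is constant, and if moreover h(0) = 0 then h ≡ 0 on U. -/

import Mathlib

open Set

-- coordinate bound
lemma coord_le_norm {d : ℕ} (v : EuclideanSpace ℝ (Fin d)) (i : Fin d) :
    |v i| ≤ ‖v‖ := by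
  have h1 : (inner ℝ (EuclideanSpace.single i (1:ℝ)) v : ℝ) = v i := by
    simp [EuclideanSpace.inner_single_left]
  have h2 := abs_real_inner_le_norm (EuclideanSpace.single i (1:ℝ)) v
  rw [h1] at h2
  simpa [EuclideanSpace.norm_single] using h2

-- functional norm bound via coordinates
lemma functional_norm_le {d : ℕ} (L : EuclideanSpace ℝ (Fin d) →L[ℝ] ℝ) :
    ‖L‖ ≤ ∑ i, |L (EuclideanSpace.single i 1)| := by
  apply ContinuousLinearMap.opNorm_le_bound _ (Finset.sum_nonneg fun i _ => abs_nonneg _)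
  intro v
  have hv : v = ∑ i, v i • EuclideanSpace.single i (1:ℝ) := by
    have := (EuclideanSpace.basisFun (Fin d) ℝ).sum_repr v
    simpa [EuclideanSpace.basisFun_apply, EuclideanSpace.basisFun_repr] using this.symm
  calc ‖L v‖ = |∑ i, v i * L (EuclideanSpace.single i 1)| := by
        rw [Real.norm_eq_abs]; congr 1
        conv_lhs => rw [hv]
        simp [map_sum]
    _ ≤ ∑ i, |v i * L (EuclideanSpace.single i 1)| := Finset.abs_sum_le_sum_abs _ _
    _ ≤ ∑ i, |L (EuclideanSpace.single i 1)| * ‖v‖ := by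
        apply Finset.sum_le_sum
        intro i _
        rw [abs_mul, mul_comm]
        exact mul_le_mul_of_nonneg_left (coord_le_norm v i) (abs_nonneg _)
    _ = (∑ i, |L (EuclideanSpace.single i 1)|) * ‖v‖ := by rw [Finset.sum_mul]

theorem stmt13 {d : ℕ}
    (U : Set (EuclideanSpace ℝ (Fin d))) (hUopen : IsOpen U)
    (hUconv : Convex ℝ U) (h0U : (0 : EuclideanSpace ℝ (Fin d)) ∈ U)
    (η : Fin d → Fin d → EuclideanSpace ℝ (Fin d) → EuclideanSpace ℝ (Fin d))
    (hmeas : ∀ i j, Measurable fun y : U => η i j y)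
    (hbd : ∀ i j, ∀ K ⊆ U, IsCompact K → ∃ C : ℝ, ∀ y ∈ K, ‖η i j y‖ ≤ C)
    (h : EuclideanSpace ℝ (Fin d) → ℝ) (hh : ContDiffOn ℝ 2 h U)
    (hgrad0 : fderiv ℝ h 0 = 0)
    (hpde : ∀ i j, ∀ y ∈ U,
      fderiv ℝ (fun w => fderiv ℝ h w (EuclideanSpace.single i 1)) y
          (EuclideanSpace.single j 1) =
        fderiv ℝ h y (η i j y)) :
    (∀ y ∈ U, fderiv ℝ h y = 0) ∧
    (∀ y ∈ U, h y = h 0) ∧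
    (h 0 = 0 → ∀ y ∈ U, h y = 0) := by
  set F : EuclideanSpace ℝ (Fin d) → (EuclideanSpace ℝ (Fin d) →L[ℝ] ℝ) := fderiv ℝ h with hF
  -- F is C¹ on U
  have hF1 : ContDiffOn ℝ 1 F U := hh.fderiv_of_isOpen (m := 1) hUopen (by norm_num)
  have hFdiff : ∀ z ∈ U, DifferentiableAt ℝ F z := fun z hz =>
    ((hF1.differentiableOn one_ne_zero) z hz).differentiableAt (hUopen.mem_nhds hz)
  have hhdiff : ∀ z ∈ U, DifferentiableAt ℝ h z := fun z hz =>
    ((hh.differentiableOn (by norm_num)) z hz).differentiableAt (hUopen.mem_nhds hz)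
  -- key identity: fderiv F z (single j 1) (single i 1) = F z (η i j z)
  have hkey : ∀ (i j : Fin d), ∀ z ∈ U,
      fderiv ℝ F z (EuclideanSpace.single j 1) (EuclideanSpace.single i 1)
        = F z (η i j z) := by
    intro i j z hz
    have := hpde i j z hz
    rw [← this]
    have hcomp : (fun w => fderiv ℝ h w (EuclideanSpace.single i 1))
        = (ContinuousLinearMap.apply ℝ ℝ (EuclideanSpace.single i (1:ℝ))) ∘ F := rfl
    rw [hcomp, fderiv_comp z (ContinuousLinearMap.differentiableAt _) (hFdiff z hz),
      ContinuousLinearMap.fderiv]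
    rfl
  have main : ∀ y ∈ U, fderiv ℝ h y = 0 := by
    intro y hy
    -- the segment
    set K : Set (EuclideanSpace ℝ (Fin d)) := segment ℝ 0 y with hKdef
    have hKU : K ⊆ U := hUconv.segment_subset h0U hy
    have hKcomp : IsCompact K := by
      rw [hKdef, segment_eq_image]
      exact (isCompact_Icc).image (by continuity)
    have hmemK : ∀ t ∈ Icc (0:ℝ) 1, t • y ∈ K := by
      intro t ht
      rw [hKdef, segment_eq_image]
      exact ⟨t, ht, by simp⟩
    -- bounds on η
    choose C hC using fun i j => hbd i j K hKU hKcomp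
    have hC0 : ∀ i j, 0 ≤ C i j := fun i j =>
      le_trans (norm_nonneg _) (hC i j 0 (left_mem_segment ℝ 0 y))
    set Kc : ℝ := ∑ i, ∑ j, |y j| * C i j with hKc
    -- the function along the segment
    set f : ℝ → (EuclideanSpace ℝ (Fin d) →L[ℝ] ℝ) := fun t => F (t • y) with hfdef
    set f' : ℝ → (EuclideanSpace ℝ (Fin d) →L[ℝ] ℝ) := fun t => fderiv ℝ F (t • y) y with hf'def
    have hγ : ∀ t : ℝ, HasDerivAt (fun s : ℝ => s • y) y t := by
      intro t
      simpa using (hasDerivAt_id t).smul_const y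
    have hfderiv : ∀ t ∈ Icc (0:ℝ) 1, HasDerivAt f (f' t) t := by
      intro t ht
      exact ((hFdiff _ (hKU (hmemK t ht))).hasFDerivAt.comp_hasDerivAt t (hγ t))
    have hfcont : ContinuousOn f (Icc 0 1) := fun t ht =>
      ((hfderiv t ht).continuousAt).continuousWithinAt
    have hbound : ∀ t ∈ Ico (0:ℝ) 1, ‖f' t‖ ≤ Kc * ‖f t‖ + 0 := by
      intro t ht
      have htI : t ∈ Icc (0:ℝ) 1 := Ico_subset_Icc_self ht
      set z := t • y with hzdef
      have hzU : z ∈ U := hKU (hmemK t htI)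
      have hzK : z ∈ K := hmemK t htI
      rw [add_zero]
      calc ‖f' t‖ ≤ ∑ i, |f' t (EuclideanSpace.single i 1)| := functional_norm_le _
        _ ≤ ∑ i, ∑ j, |y j| * C i j * ‖f t‖ := by
            apply Finset.sum_le_sum
            intro i _
            -- expand y in the outer argument
            have hy' : y = ∑ j, y j • EuclideanSpace.single j (1:ℝ) := by
              have := (EuclideanSpace.basisFun (Fin d) ℝ).sum_repr y
              simpa [EuclideanSpace.basisFun_apply, EuclideanSpace.basisFun_repr]
                using this.symm
            have hexp : f' t (EuclideanSpace.single i 1)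
                = ∑ j, y j * F z (η i j z) := by
              show fderiv ℝ F z y (EuclideanSpace.single i 1) = _
              conv_lhs => rw [hy']
              rw [map_sum]
              simp only [map_smul]
              rw [ContinuousLinearMap.sum_apply]
              congr 1
              ext j
              rw [ContinuousLinearMap.smul_apply, hkey i j z hzU, smul_eq_mul]
            rw [hexp]
            calc |∑ j, y j * F z (η i j z)| ≤ ∑ j, |y j * F z (η i j z)| :=
                  Finset.abs_sum_le_sum_abs _ _
              _ ≤ ∑ j, |y j| * C i j * ‖f t‖ := by
                  apply Finset.sum_le_sum
                  intro j _
                  rw [abs_mul, mul_assoc]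
                  refine mul_le_mul_of_nonneg_left ?_ (abs_nonneg _)
                  calc |F z (η i j z)| ≤ ‖F z‖ * ‖η i j z‖ :=
                        (F z).le_opNorm _
                    _ ≤ ‖F z‖ * C i j := by
                        exact mul_le_mul_of_nonneg_left (hC i j z hzK) (norm_nonneg _)
                    _ = C i j * ‖f t‖ := by rw [mul_comm]
        _ = Kc * ‖f t‖ := by rw [hKc, Finset.sum_mul]; congr 1; ext i; rw [Finset.sum_mul]
    have hf0 : ‖f 0‖ ≤ 0 := by
      have hf00 : f 0 = 0 := by
        show F ((0:ℝ) • y) = 0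
        rw [zero_smul]; exact hgrad0
      rw [hf00, norm_zero]
    have := norm_le_gronwallBound_of_norm_deriv_right_le hfcont
      (fun t ht => (hfderiv t (Ico_subset_Icc_self ht)).hasDerivWithinAt) hf0 hbound
    have h1 := this 1 (by norm_num)
    rw [gronwallBound_ε0_δ0] at h1
    have : f 1 = 0 := norm_le_zero_iff.mp h1
    simpa [hfdef, hF] using this
  have hconst : ∀ y ∈ U, h y = h 0 := by
    intro y hy
    have hle := hUconv.norm_image_sub_le_of_norm_fderiv_le (fun x hx => hhdiff x hx)
      (C := 0) (fun x hx => by rw [main x hx]; simp) h0U hy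
    have h2 : ‖h y - h 0‖ ≤ 0 := by simpa using hle
    exact sub_eq_zero.mp (norm_le_zero_iff.mp h2)
  exact ⟨main, hconst, fun h0 y hy => by rw [hconst y hy, h0]⟩
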